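/- Let n ≥ 2 and 1 ≤ d ≤ n-1, and let β be the acyclic orientation of Cycle_n with unique source d and unique sink n. Then TPro_β^d = (cyc^{-1} ∘ Bro_{\{1,...,d\}}^{-1})^n as operators on labelings of Path_n, where Bro_{\{1,...,d\}} = τ_d ··· τ_2 τ_1 and cyc is the cyclic shift. -/

import Mathlib

open scoped Classical

noncomputable def toggle {V : Type*} {n : ℕ} (G : SimpleGraph V) (i : ZMod n)
    (σ : V ≃ ZMod n) : V ≃ ZMod n :=
  if G.Adj (σ.symm i) (σ.symm (i + 1)) then σ else σ.trans (Equiv.swap i (i + 1))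

noncomputable def applyToggles {V : Type*} {n : ℕ} (G : SimpleGraph V)
    (L : List (ZMod n)) (σ : V ≃ ZMod n) : V ≃ ZMod n :=
  L.foldl (fun τ i => toggle G i τ) σ

noncomputable def tpro {V : Type*} {n : ℕ} (G : SimpleGraph V) (π : Fin n ≃ ZMod n)
    (σ : V ≃ ZMod n) : V ≃ ZMod n :=
  applyToggles G (List.ofFn fun k => π k) σ

def cycShift {V : Type*} {n : ℕ} (σ : V ≃ ZMod n) : V ≃ ZMod n :=
  σ.trans (Equiv.addRight (1 : ZMod n))

noncomputable def broList {n : ℕ} (B : Finset (ZMod n)) (c : ZMod n) : List (ZMod n) :=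
  ((List.range n).map (fun j => c + 1 + (j : ZMod n))).filter (· ∈ B)

noncomputable def cycBro {V : Type*} {n : ℕ} (G : SimpleGraph V) (B : Finset (ZMod n))
    (c : ZMod n) (σ : V ≃ ZMod n) : V ≃ ZMod n :=
  cycShift (applyToggles G (broList B c) σ)

def linExt {n : ℕ} (o : ZMod n → Bool) (π : Fin n ≃ ZMod n) : Prop :=
  ∀ a : ZMod n, if o a then π.symm a < π.symm (a + 1) else π.symm (a + 1) < π.symm a

/-- `Bro_{1,...,d}` followed by `cyc`, i.e. the inverse of `cyc⁻¹ ∘ Bro_{1,...,d}⁻¹`. -/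
noncomputable def broCyc (n d : ℕ) (σ : Fin n ≃ ZMod n) : Fin n ≃ ZMod n :=
  applyToggles (SimpleGraph.pathGraph n)
    ((List.range d).map (fun j => ((j + 1 : ℕ) : ZMod n))) (cycShift σ)


section Machinery

variable {V : Type*} {n : ℕ} (G : SimpleGraph V)

/-- two toggle indices are "far": they do not interact. -/
def Far (i j : ZMod n) : Prop := i ≠ j ∧ i ≠ j + 1 ∧ j ≠ i + 1

lemma Far.symm {i j : ZMod n} (h : Far i j) : Far j i :=
  ⟨h.1.symm, h.2.2, h.2.1⟩

lemma applyToggles_append (L₁ L₂ : List (ZMod n)) (σ : V ≃ ZMod n) :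
    applyToggles G (L₁ ++ L₂) σ = applyToggles G L₂ (applyToggles G L₁ σ) :=
  List.foldl_append ..

lemma toggle_symm_eq (i : ZMod n) (σ : V ≃ ZMod n) (x : ZMod n) (hx : x ≠ i) (hx' : x ≠ i + 1) :
    (toggle G i σ).symm x = σ.symm x := by
  unfold toggle
  split
  · rfl
  · simp [Equiv.symm_trans_apply, Equiv.symm_swap, Equiv.swap_apply_of_ne_of_ne hx hx']

lemma toggle_invol (i : ZMod n) (σ : V ≃ ZMod n) :
    toggle G i (toggle G i σ) = σ := by
  unfold toggle
  by_cases h : G.Adj (σ.symm i) (σ.symm (i + 1))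
  · simp [h]
  · simp only [h, if_false]
    have h1 : (σ.trans (Equiv.swap i (i + 1))).symm i = σ.symm (i + 1) := by
      simp [Equiv.symm_trans_apply, Equiv.symm_swap]
    have h2 : (σ.trans (Equiv.swap i (i + 1))).symm (i + 1) = σ.symm i := by
      simp [Equiv.symm_trans_apply, Equiv.symm_swap]
    rw [h1, h2]
    have : ¬ G.Adj (σ.symm (i+1)) (σ.symm i) := fun hadj => h hadj.symm
    simp only [this, if_false]
    rw [Equiv.trans_assoc, Equiv.swap_swap, Equiv.trans_refl]

lemma toggle_comm {i j : ZMod n} (h : Far i j) (σ : V ≃ ZMod n) :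
    toggle G j (toggle G i σ) = toggle G i (toggle G j σ) := by
  obtain ⟨hij, hij1, hji1⟩ := h
  have hii : i + 1 ≠ j + 1 := fun hc => hij (add_right_cancel hc)
  have swap_comm : (Equiv.swap i (i+1)).trans (Equiv.swap j (j+1))
      = (Equiv.swap j (j+1)).trans (Equiv.swap i (i+1)) := by
    ext x
    simp only [Equiv.trans_apply, Equiv.swap_apply_def]
    split_ifs <;> grind
  have keyj : ∀ τ : V ≃ ZMod n,
      (toggle G i τ).symm j = τ.symm j ∧ (toggle G i τ).symm (j+1) = τ.symm (j+1) :=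
    fun τ => ⟨toggle_symm_eq G i τ j hij.symm hji1,
      toggle_symm_eq G i τ (j+1) hij1.symm (fun hc => hii hc.symm)⟩
  have keyi : ∀ τ : V ≃ ZMod n,
      (toggle G j τ).symm i = τ.symm i ∧ (toggle G j τ).symm (i+1) = τ.symm (i+1) :=
    fun τ => ⟨toggle_symm_eq G j τ i hij hij1, toggle_symm_eq G j τ (i+1) hji1.symm hii⟩
  by_cases hA : G.Adj (σ.symm i) (σ.symm (i + 1)) <;>
    by_cases hB : G.Adj (σ.symm j) (σ.symm (j + 1))
  · have ei : toggle G i σ = σ := by rw [toggle, if_pos hA]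
    have ej : toggle G j σ = σ := by rw [toggle, if_pos hB]
    rw [ei, ej, ei]
  · have ei : toggle G i σ = σ := by rw [toggle, if_pos hA]
    have ej : toggle G j σ = σ.trans (Equiv.swap j (j+1)) := by rw [toggle, if_neg hB]
    rw [ei, ej]
    have hA' : G.Adj ((σ.trans (Equiv.swap j (j+1))).symm i)
        ((σ.trans (Equiv.swap j (j+1))).symm (i+1)) := by
      have h1 := (keyi σ).1
      have h2 := (keyi σ).2
      rw [ej] at h1 h2
      rw [h1, h2]; exact hA
    rw [toggle, if_pos hA']
  · have ej : toggle G j σ = σ := by rw [toggle, if_pos hB]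
    have ei : toggle G i σ = σ.trans (Equiv.swap i (i+1)) := by rw [toggle, if_neg hA]
    rw [ei, ej]
    have hB' : G.Adj ((σ.trans (Equiv.swap i (i+1))).symm j)
        ((σ.trans (Equiv.swap i (i+1))).symm (j+1)) := by
      have h1 := (keyj σ).1
      have h2 := (keyj σ).2
      rw [ei] at h1 h2
      rw [h1, h2]; exact hB
    rw [toggle, if_pos hB', ei]
  · have ei : toggle G i σ = σ.trans (Equiv.swap i (i+1)) := by rw [toggle, if_neg hA]
    have ej : toggle G j σ = σ.trans (Equiv.swap j (j+1)) := by rw [toggle, if_neg hB]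
    rw [ei, ej]
    have hB' : ¬ G.Adj ((σ.trans (Equiv.swap i (i+1))).symm j)
        ((σ.trans (Equiv.swap i (i+1))).symm (j+1)) := by
      have h1 := (keyj σ).1
      have h2 := (keyj σ).2
      rw [ei] at h1 h2
      rw [h1, h2]; exact hB
    have hA' : ¬ G.Adj ((σ.trans (Equiv.swap j (j+1))).symm i)
        ((σ.trans (Equiv.swap j (j+1))).symm (i+1)) := by
      have h1 := (keyi σ).1
      have h2 := (keyi σ).2
      rw [ej] at h1 h2
      rw [h1, h2]; exact hA
    rw [toggle, if_neg hB', toggle, if_neg hA', Equiv.trans_assoc, Equiv.trans_assoc, swap_comm]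

/-- trace equivalence on toggle words -/
inductive TEq {n : ℕ} : List (ZMod n) → List (ZMod n) → Prop
  | refl (L) : TEq L L
  | trans {L₁ L₂ L₃} : TEq L₁ L₂ → TEq L₂ L₃ → TEq L₁ L₃
  | swap (L₁ L₂) (i j : ZMod n) (h : Far i j) :
      TEq (L₁ ++ i :: j :: L₂) (L₁ ++ j :: i :: L₂)

lemma TEq.symm {L₁ L₂ : List (ZMod n)} (h : TEq L₁ L₂) : TEq L₂ L₁ := by
  induction h with
  | refl L => exact TEq.refl L
  | trans _ _ ih1 ih2 => exact ih2.trans ih1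
  | swap L₁ L₂ i j h => exact TEq.swap L₁ L₂ j i h.symm

lemma TEq.context {A B : List (ZMod n)} (C D : List (ZMod n)) (h : TEq A B) :
    TEq (C ++ A ++ D) (C ++ B ++ D) := by
  induction h with
  | refl L => exact TEq.refl _
  | trans _ _ ih1 ih2 => exact ih1.trans ih2
  | swap L₁ L₂ i j h =>
      have := TEq.swap (C ++ L₁) (L₂ ++ D) i j h
      simpa using this

lemma TEq.cons {A B : List (ZMod n)} (x : ZMod n) (h : TEq A B) : TEq (x :: A) (x :: B) := by
  have := h.context [x] []
  simpa using this

lemma TEq.append_congr {A B C D : List (ZMod n)} (h1 : TEq A B) (h2 : TEq C D) :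
    TEq (A ++ C) (B ++ D) := by
  have t1 : TEq (A ++ C) (B ++ C) := by have := h1.context [] C; simpa using this
  have t2 : TEq (B ++ C) (B ++ D) := by have := h2.context B []; simpa using this
  exact t1.trans t2

lemma TEq.apply {L₁ L₂ : List (ZMod n)} (h : TEq L₁ L₂) (σ : V ≃ ZMod n) :
    applyToggles G L₁ σ = applyToggles G L₂ σ := by
  induction h generalizing σ with
  | refl L => rfl
  | trans _ _ ih1 ih2 => rw [ih1, ih2]
  | swap A B i j hf =>
      have : ∀ K : List (ZMod n), ∀ τ : V ≃ ZMod n,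
          applyToggles G (i :: j :: K) τ = applyToggles G (j :: i :: K) τ := by
        intro K τ
        show applyToggles G K (toggle G j (toggle G i τ))
          = applyToggles G K (toggle G i (toggle G j τ))
        rw [toggle_comm G hf]
      rw [show A ++ i :: j :: B = A ++ ((i :: j :: B) : List (ZMod n)) from rfl,
        applyToggles_append, applyToggles_append, this]

lemma pullOne {x : ZMod n} {L : List (ZMod n)} (K : List (ZMod n))
    (h : ∀ y ∈ L, Far x y) : TEq (L ++ x :: K) (x :: (L ++ K)) := by
  induction L with
  | nil => exact TEq.refl _
  | cons a L ih =>
      have h1 : TEq (a :: (L ++ x :: K)) (a :: x :: (L ++ K)) :=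
        (ih (fun y hy => h y (List.mem_cons_of_mem a hy))).cons a
      have h2 : TEq ([] ++ a :: x :: (L ++ K)) ([] ++ x :: a :: (L ++ K)) :=
        TEq.swap [] (L ++ K) a x ((h a List.mem_cons_self).symm)
      simpa using h1.trans (by simpa using h2)

lemma pullList : ∀ (U : List (ZMod n)) (L K : List (ZMod n)),
    (∀ x ∈ U, ∀ y ∈ L, Far x y) → TEq (L ++ U ++ K) (U ++ (L ++ K))
  | [], L, K, _ => by simpa using TEq.refl (L ++ K)
  | u :: U, L, K, h => by
      have e1 : L ++ (u :: U) ++ K = L ++ u :: (U ++ K) := by simp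
      have h1 : TEq (L ++ u :: (U ++ K)) (u :: (L ++ (U ++ K))) :=
        pullOne _ (fun y hy => h u List.mem_cons_self y hy)
      have h2 : TEq (L ++ U ++ K) (U ++ (L ++ K)) :=
        pullList U L K (fun x hx y hy => h x (List.mem_cons_of_mem u hx) y hy)
      rw [e1]
      refine h1.trans ?_
      have := h2.cons u
      simpa using this

end Machinery

section Words

variable {V : Type*} {n : ℕ} (G : SimpleGraph V)

/-- ascending word: a, a+1, ..., a+w-1 (as elements of ZMod n) -/
def ascL (n : ℕ) (a w : ℕ) : List (ZMod n) :=
  (List.range w).map fun t => ((a + t : ℕ) : ZMod n)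

/-- descending word: a, a-1, ..., a-w+1 -/
def descL (n : ℕ) (a w : ℕ) : List (ZMod n) :=
  (List.range w).map fun t => ((a - t : ℕ) : ZMod n)

lemma ascL_append (a u v : ℕ) : ascL n a (u + v) = ascL n a u ++ ascL n (a + u) v := by
  unfold ascL
  rw [List.range_add, List.map_append, List.map_map]
  congr 1
  apply List.map_congr_left
  intro t _
  simp only [Function.comp_apply]
  congr 1
  omega

lemma descL_append (a u v : ℕ) : descL n a (u + v) = descL n a u ++ descL n (a - u) v := by
  unfold descL
  rw [List.range_add, List.map_append, List.map_map]
  congr 1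
  apply List.map_congr_left
  intro t _
  simp only [Function.comp_apply]
  congr 1
  omega

lemma ascL_zero (a : ℕ) : ascL n a 0 = [] := rfl

lemma ascL_one (a : ℕ) : ascL n a 1 = [((a : ℕ) : ZMod n)] := by
  simp [ascL, List.range_succ]

lemma ascL_succ_last (a w : ℕ) : ascL n a (w + 1) = ascL n a w ++ [((a + w : ℕ) : ZMod n)] := by
  simp [ascL, List.range_succ]

lemma descL_succ_last (a w : ℕ) : descL n a (w + 1) = descL n a w ++ [((a - w : ℕ) : ZMod n)] := by
  simp [descL, List.range_succ]

lemma ascL_succ_head (a w : ℕ) :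
    ascL n a (w + 1) = ((a : ℕ) : ZMod n) :: ascL n (a + 1) w := by
  unfold ascL
  rw [List.range_succ_eq_map, List.map_cons, List.map_map]
  refine congrArg₂ _ (by norm_num) (List.map_congr_left fun t _ => ?_)
  show ((a + (t + 1) : ℕ) : ZMod n) = ((a + 1 + t : ℕ) : ZMod n)
  congr 1; omega

lemma descL_succ_head (a w : ℕ) :
    descL n a (w + 1) = ((a : ℕ) : ZMod n) :: descL n (a - 1) w := by
  unfold descL
  rw [List.range_succ_eq_map, List.map_cons, List.map_map]
  refine congrArg₂ _ (by norm_num) (List.map_congr_left fun t _ => ?_)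
  show ((a - (t + 1) : ℕ) : ZMod n) = ((a - 1 - t : ℕ) : ZMod n)
  congr 1; omega

lemma ascL_mod (a w : ℕ) : ascL n (n + a) w = ascL n a w := by
  unfold ascL
  apply List.map_congr_left
  intro t _
  push_cast
  rw [ZMod.natCast_self]
  ring

lemma ascL_reverse (a w : ℕ) : (ascL n a w).reverse = descL n (a + w - 1) w := by
  induction w with
  | zero => rfl
  | succ w ih =>
      have e1 : a + (w + 1) - 1 = a + w := by omega
      rw [e1, descL_succ_head, ascL_succ_last, List.reverse_append, ih]
      simp

lemma descL_reverse (a w : ℕ) (h : w ≤ a + 1) : (descL n a w).reverse = ascL n (a + 1 - w) w := by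
  have h2 := ascL_reverse (n := n) (a + 1 - w) w
  have e : a + 1 - w + w - 1 = a := by omega
  rw [e] at h2
  rw [← h2, List.reverse_reverse]

lemma mem_ascL {x : ZMod n} {a w : ℕ} (hx : x ∈ ascL n a w) :
    ∃ t, t < w ∧ x = ((a + t : ℕ) : ZMod n) := by
  simp only [ascL, List.mem_map, List.mem_range] at hx
  obtain ⟨t, ht, rfl⟩ := hx
  exact ⟨t, ht, rfl⟩

lemma farNat (hn : 2 ≤ n) {A B : ℕ} (h1 : B + 2 ≤ A) (h2 : A ≤ B + (n - 2)) :
    Far ((A : ℕ) : ZMod n) ((B : ℕ) : ZMod n) := by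
  haveI : NeZero n := ⟨by omega⟩
  have hcast : ((A : ℕ) : ZMod n) - ((B : ℕ) : ZMod n) = ((A - B : ℕ) : ZMod n) := by
    rw [Nat.cast_sub (by omega)]
  have hval : ((A - B : ℕ) : ZMod n).val = A - B := ZMod.val_cast_of_lt (by omega)
  refine ⟨?_, ?_, ?_⟩
  · intro hc
    have : ((A - B : ℕ) : ZMod n) = 0 := by rw [← hcast, hc, sub_self]
    rw [this] at hval
    simp only [ZMod.val_zero] at hval
    omega
  · intro hc
    have : ((A - B : ℕ) : ZMod n) = ((1 : ℕ) : ZMod n) := by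
      rw [← hcast, hc]; push_cast; ring
    rw [this, ZMod.val_cast_of_lt (by omega)] at hval
    omega
  · intro hc
    have : ((A - B : ℕ) : ZMod n) = ((n - 1 : ℕ) : ZMod n) := by
      rw [← hcast, hc]
      have : ((n - 1 : ℕ) : ZMod n) = (n : ℕ) - 1 := by
        rw [Nat.cast_sub (by omega), Nat.cast_one]
      rw [this, ZMod.natCast_self]
      ring
    rw [this, ZMod.val_cast_of_lt (by omega)] at hval
    omega

/-- extraction of heads of rows plus a final letter -/
lemma extract (x : ZMod n) : ∀ (rows : List (ZMod n × List (ZMod n))),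
    rows.Pairwise (fun p q => ∀ y ∈ p.2, Far q.1 y) →
    (∀ p ∈ rows, ∀ y ∈ p.2, Far x y) →
    TEq ((rows.flatMap fun p => p.1 :: p.2) ++ [x])
      ((rows.map Prod.fst) ++ x :: (rows.flatMap Prod.snd))
  | [], _, _ => by simpa using TEq.refl [x]
  | (h, t) :: rows, hp, hx => by
      have ih := extract x rows (List.Pairwise.sublist (List.sublist_cons_self _ _) hp)
        (fun p hp' y hy => hx p (List.mem_cons_of_mem _ hp') y hy)
      have step1 : TEq ((h :: t) ++ ((rows.flatMap fun p => p.1 :: p.2) ++ [x]))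
          ((h :: t) ++ ((rows.map Prod.fst) ++ x :: (rows.flatMap Prod.snd))) := by
        have := ih.context (h :: t) []
        simpa using this
      have hfar : ∀ z ∈ (rows.map Prod.fst) ++ [x], ∀ y ∈ t, Far z y := by
        intro z hz y hy
        rcases List.mem_append.1 hz with hz | hz
        · obtain ⟨p, hpmem, rfl⟩ := List.mem_map.1 hz
          exact (List.pairwise_cons.1 hp).1 p hpmem y hy
        · rw [List.mem_singleton.1 hz]
          exact hx (h, t) List.mem_cons_self y hy
      have step2 : TEq (t ++ ((rows.map Prod.fst) ++ [x]) ++ (rows.flatMap Prod.snd))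
          (((rows.map Prod.fst) ++ [x]) ++ (t ++ (rows.flatMap Prod.snd))) :=
        pullList _ _ _ hfar
      have e1 : (((h, t) :: rows).flatMap fun p => p.1 :: p.2) ++ [x]
          = (h :: t) ++ ((rows.flatMap fun p => p.1 :: p.2) ++ [x]) := by simp
      have e2 : (h :: t) ++ ((rows.map Prod.fst) ++ x :: (rows.flatMap Prod.snd))
          = h :: (t ++ ((rows.map Prod.fst) ++ [x]) ++ (rows.flatMap Prod.snd)) := by simp
      have e3 : h :: (((rows.map Prod.fst) ++ [x]) ++ (t ++ (rows.flatMap Prod.snd)))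
          = (((h, t) :: rows).map Prod.fst) ++ x :: (((h, t) :: rows).flatMap Prod.snd) := by
        simp
      rw [e1, ← e3]
      exact (step1.trans (by rw [e2]; exact step2.cons h))

lemma applyToggles_cancel (L : List (ZMod n)) (σ : V ≃ ZMod n) :
    applyToggles G (L ++ L.reverse) σ = σ := by
  induction L generalizing σ with
  | nil => rfl
  | cons a L ih =>
      have e : (a :: L) ++ (a :: L).reverse = a :: ((L ++ L.reverse) ++ [a]) := by simp
      rw [e]
      show applyToggles G ((L ++ L.reverse) ++ [a]) (toggle G a σ) = σ
      rw [applyToggles_append, ih]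
      show toggle G a (toggle G a σ) = σ
      exact toggle_invol G a σ

end Words

section MainWords

variable (n d : ℕ)

def NrL (r : ℕ) : List (ZMod n) := (List.range (n - d)).flatMap fun j => ascL n (n - j) (d - r)
def VrL (r : ℕ) : List (ZMod n) :=
  (List.range (d - r)).flatMap fun i => ascL n (d - (r + i)) d
def ML (r : ℕ) : List (ZMod n) := NrL n d r ++ VrL n d r
def QL : List (ZMod n) := ascL n 0 d ++ descL n (n - 1) (n - d)
def PL : List (ZMod n) := ascL n d (n - d) ++ descL n (d - 1) d

variable {n d}

lemma flatMap_congr {α β : Type*} {l : List α} {f g : α → List β} (h : ∀ a ∈ l, f a = g a) :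
    l.flatMap f = l.flatMap g := by
  induction l with
  | nil => rfl
  | cons a l ih =>
      simp only [List.flatMap_cons]
      rw [h a List.mem_cons_self, ih fun a ha => h a (List.mem_cons_of_mem _ ha)]

lemma QL_reverse_eq_PL (hd1 : 1 ≤ d) (hdn : d < n) : (QL n d).reverse = PL n d := by
  unfold QL PL
  rw [List.reverse_append, descL_reverse _ _ (by omega), ascL_reverse]
  congr 2 <;> omega

lemma stepTEq (hn : 2 ≤ n) (hd1 : 1 ≤ d) (hdn : d < n) {r : ℕ} (hr : r < d) :
    TEq (ML n d r) (QL n d ++ ML n d (r + 1)) := by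
  set x : ZMod n := ((d : ℕ) : ZMod n) with hx
  -- row decomposition of the narrow block
  have E1 : NrL n d r = ascL n n (d - r)
      ++ (List.range (n - d - 1)).flatMap (fun j => ascL n (n - (j + 1)) (d - r)) := by
    unfold NrL
    rw [show n - d = (n - d - 1) + 1 by omega, List.range_succ_eq_map, List.flatMap_cons,
      List.flatMap_map]
    simp
  have E2 : VrL n d r = ascL n (d - r) d ++ VrL n d (r + 1) := by
    unfold VrL
    rw [show d - r = (d - (r + 1)) + 1 by omega, List.range_succ_eq_map, List.flatMap_cons,
      List.flatMap_map]
    congr 1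
    · congr 2; omega
    · apply flatMap_congr; intro a _; congr 2; omega
  have E3 : ascL n (d - r) d = ascL n (d - r) r ++ x :: ascL n (d + 1) (d - 1 - r) := by
    have h0 : ascL n (d - r) d = ascL n (d - r) (r + (1 + (d - 1 - r))) := by congr 1; omega
    rw [h0, ascL_append, ascL_append, ascL_one]
    have h1 : d - r + r = d := by omega
    rw [h1]
    simp [hx]
  have E4 : ascL n n (d - r) ++ ascL n (d - r) r = ascL n 0 d := by
    have h1 : ascL n n (d - r) = ascL n 0 (d - r) := by
      have := ascL_mod (n := n) 0 (d - r)
      simpa using this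
    rw [h1, show d = (d - r) + r by omega, ascL_append]
    simp
  -- the rows whose heads get extracted
  set g : ℕ → (ZMod n) × List (ZMod n) :=
    fun j => (((n - 1 - j : ℕ) : ZMod n), ascL n (n - j) (d - r - 1)) with hg
  set rows : List ((ZMod n) × List (ZMod n)) := (List.range (n - d - 1)).map g with hrows
  have T1 : (List.range (n - d - 1)).flatMap (fun j => ascL n (n - (j + 1)) (d - r))
      = rows.flatMap fun p => p.1 :: p.2 := by
    rw [hrows, List.flatMap_map]
    apply flatMap_congr
    intro j hj
    rw [List.mem_range] at hj
    simp only [hg]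
    obtain ⟨w, hw⟩ : ∃ w, d - r = w + 1 := ⟨d - r - 1, by omega⟩
    have hw' : d - r - 1 = w := by omega
    rw [hw', hw, ascL_succ_head]
    have a2 : n - (j + 1) + 1 = n - j := by omega
    have a1 : n - (j + 1) = n - 1 - j := by omega
    rw [a2, a1]
  have Theads : rows.map Prod.fst = descL n (n - 1) (n - d - 1) := by
    rw [hrows, List.map_map]; rfl
  have Ttails : rows.flatMap Prod.snd
      = (List.range (n - d - 1)).flatMap fun j => ascL n (n - j) (d - r - 1) := by
    rw [hrows, List.flatMap_map]
  have E5 : descL n (n - 1) (n - d - 1) ++ [x] = descL n (n - 1) (n - d) := by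
    rw [show n - d = (n - d - 1) + 1 by omega, descL_succ_last]
    congr 2
    rw [hx]; congr 1; omega
  have E6 : ((List.range (n - d - 1)).flatMap fun j => ascL n (n - j) (d - r - 1))
      ++ ascL n (d + 1) (d - 1 - r) = NrL n d (r + 1) := by
    unfold NrL
    rw [show n - d = (n - d - 1) + 1 by omega, List.range_succ, List.flatMap_append]
    simp only [List.flatMap_cons, List.flatMap_nil, List.append_nil]
    rw [show n - (n - d - 1) = d + 1 by omega]
    congr 1
    congr 1
    omega
  -- far conditions
  have O1 : ∀ z ∈ ascL n (d - r) r,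
      ∀ y ∈ (List.range (n - d - 1)).flatMap (fun j => ascL n (n - (j + 1)) (d - r)), Far z y := by
    intro z hz y hy
    obtain ⟨i, hi, rfl⟩ := mem_ascL hz
    simp only [List.mem_flatMap, List.mem_range] at hy
    obtain ⟨j, hj, hy2⟩ := hy
    obtain ⟨s, hs, rfl⟩ := mem_ascL hy2
    exact (farNat hn (by omega) (by omega)).symm
  have O2 : rows.Pairwise (fun p q => ∀ y ∈ p.2, Far q.1 y) := by
    rw [hrows, List.pairwise_map]
    refine List.Pairwise.imp_of_mem ?_ List.pairwise_lt_range
    intro j j' hj hj' hlt y hy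
    rw [List.mem_range] at hj hj'
    obtain ⟨s, hs, rfl⟩ := mem_ascL hy
    rw [hg]
    exact (farNat hn (by omega) (by omega)).symm
  have O3 : ∀ p ∈ rows, ∀ y ∈ p.2, Far x y := by
    intro p hp y hy
    rw [hrows] at hp
    obtain ⟨j, hj, rfl⟩ := List.mem_map.1 hp
    rw [List.mem_range] at hj
    rw [hg] at hy
    obtain ⟨s, hs, rfl⟩ := mem_ascL hy
    rw [hx]
    exact (farNat hn (by omega) (by omega)).symm
  -- now chain everything
  set T : List (ZMod n) :=
    (List.range (n - d - 1)).flatMap (fun j => ascL n (n - (j + 1)) (d - r)) with hT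
  set A1 : List (ZMod n) := ascL n n (d - r) with hA1
  set U : List (ZMod n) := ascL n (d - r) r with hU
  set B1 : List (ZMod n) := ascL n (d + 1) (d - 1 - r) with hB1
  have start : ML n d r = A1 ++ (T ++ U ++ (x :: (B1 ++ VrL n d (r + 1)))) := by
    unfold ML
    rw [E1, E2, E3]
    simp [List.append_assoc]
  have step1 : TEq (T ++ U ++ (x :: (B1 ++ VrL n d (r + 1))))
      (U ++ (T ++ (x :: (B1 ++ VrL n d (r + 1))))) := pullList _ _ _ O1
  have step1' : TEq (ML n d r) (A1 ++ U ++ (T ++ [x] ++ (B1 ++ VrL n d (r + 1)))) := by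
    rw [start]
    have := step1.context A1 []
    simpa [List.append_assoc] using this
  have step2 : TEq (T ++ [x]) (descL n (n - 1) (n - d - 1) ++ x :: (rows.flatMap Prod.snd)) := by
    have := extract x rows O2 O3
    rw [← T1, Theads] at this
    exact this
  have step2' : TEq (A1 ++ U ++ (T ++ [x] ++ (B1 ++ VrL n d (r + 1))))
      (A1 ++ U ++ ((descL n (n - 1) (n - d - 1) ++ x :: (rows.flatMap Prod.snd))
        ++ (B1 ++ VrL n d (r + 1)))) := by
    have := step2.context (A1 ++ U) (B1 ++ VrL n d (r + 1))
    simpa [List.append_assoc] using this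
  have final : A1 ++ U ++ ((descL n (n - 1) (n - d - 1) ++ x :: (rows.flatMap Prod.snd))
        ++ (B1 ++ VrL n d (r + 1))) = QL n d ++ ML n d (r + 1) := by
    have e1 : A1 ++ U = ascL n 0 d := E4
    have e2 : descL n (n - 1) (n - d - 1) ++ x :: (rows.flatMap Prod.snd)
        = descL n (n - 1) (n - d) ++ rows.flatMap Prod.snd := by
      rw [← E5]; simp [List.append_assoc]
    have e3 : rows.flatMap Prod.snd ++ B1 = NrL n d (r + 1) := by
      rw [Ttails, hB1]; exact E6
    calc A1 ++ U ++ ((descL n (n - 1) (n - d - 1) ++ x :: (rows.flatMap Prod.snd))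
        ++ (B1 ++ VrL n d (r + 1)))
        = (A1 ++ U) ++ (descL n (n - 1) (n - d) ++ ((rows.flatMap Prod.snd ++ B1)
            ++ VrL n d (r + 1))) := by rw [e2]; simp [List.append_assoc]
      _ = QL n d ++ ML n d (r + 1) := by rw [e1, e3]; unfold QL ML; simp [List.append_assoc]
  rw [← final]
  exact step1'.trans step2'

end MainWords

section Chain

variable {n d : ℕ}

def QrepL (n d : ℕ) : ℕ → List (ZMod n)
  | 0 => []
  | k + 1 => QrepL n d k ++ QL n d

lemma QrepL_cons (k : ℕ) : QrepL n d (k + 1) = QL n d ++ QrepL n d k := by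
  induction k with
  | zero => simp [QrepL]
  | succ k ih =>
      show QrepL n d (k + 1) ++ QL n d = QL n d ++ (QrepL n d k ++ QL n d)
      rw [ih, List.append_assoc]

lemma flatMap_nil_const {α β : Type*} (l : List α) :
    (l.flatMap fun _ => ([] : List β)) = [] := by
  induction l <;> simp_all

lemma ML_self_nil : ML n d d = [] := by
  unfold ML NrL VrL
  rw [Nat.sub_self]
  have h1 : (List.range (n - d)).flatMap (fun j => ascL n (n - j) 0)
      = (List.range (n - d)).flatMap fun _ => ([] : List (ZMod n)) :=
    flatMap_congr fun a _ => rfl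
  rw [h1, flatMap_nil_const]
  simp

lemma chainTEq (hn : 2 ≤ n) (hd1 : 1 ≤ d) (hdn : d < n) :
    ∀ k, k ≤ d → TEq (ML n d (d - k)) (QrepL n d k)
  | 0, _ => by
      rw [Nat.sub_zero, ML_self_nil]
      exact TEq.refl _
  | k + 1, hk => by
      have ih := chainTEq hn hd1 hdn k (by omega)
      have hstep := stepTEq hn hd1 hdn (r := d - (k + 1)) (by omega)
      rw [show d - (k + 1) + 1 = d - k by omega] at hstep
      refine hstep.trans ?_
      rw [QrepL_cons]
      have := ih.context (QL n d) []
      simpa using this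

def WL (n d : ℕ) : List (ZMod n) := (List.range n).flatMap fun j => ascL n (n - j) d

lemma WL_eq_ML0 (hdn : d ≤ n) : WL n d = ML n d 0 := by
  unfold WL ML NrL VrL
  rw [show List.range n = List.range ((n - d) + d) by rw [Nat.sub_add_cancel hdn],
    List.range_add, List.flatMap_append, List.flatMap_map]
  congr 1
  apply flatMap_congr; intro a _; congr 1; omega

lemma WL_TEq_Qrep (hn : 2 ≤ n) (hd1 : 1 ≤ d) (hdn : d < n) : TEq (WL n d) (QrepL n d d) := by
  rw [WL_eq_ML0 (le_of_lt hdn)]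
  have := chainTEq hn hd1 hdn d (le_refl d)
  rwa [Nat.sub_self] at this

end Chain

section Cyc

variable {V : Type*} {n : ℕ} (G : SimpleGraph V)

lemma cycShift_symm_apply (σ : V ≃ ZMod n) (x : ZMod n) :
    (cycShift σ).symm x = σ.symm (x - 1) := by
  simp [cycShift, Equiv.symm_trans_apply, Equiv.addRight, sub_eq_add_neg]

lemma cycShift_toggle (i : ZMod n) (σ : V ≃ ZMod n) :
    cycShift (toggle G i σ) = toggle G (i + 1) (cycShift σ) := by
  have hc1 : (cycShift σ).symm (i + 1) = σ.symm i := by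
    rw [cycShift_symm_apply]; congr 1; ring
  have hc2 : (cycShift σ).symm (i + 1 + 1) = σ.symm (i + 1) := by
    rw [cycShift_symm_apply]; congr 1; ring
  unfold toggle
  rw [hc1, hc2]
  by_cases h : G.Adj (σ.symm i) (σ.symm (i + 1))
  · rw [if_pos h, if_pos h]
  · rw [if_neg h, if_neg h]
    show (σ.trans (Equiv.swap i (i + 1))).trans (Equiv.addRight 1)
        = (σ.trans (Equiv.addRight 1)).trans (Equiv.swap (i + 1) (i + 1 + 1))
    rw [Equiv.trans_assoc, Equiv.trans_assoc]
    congr 1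
    ext z
    simp only [Equiv.trans_apply, Equiv.coe_addRight]
    rcases eq_or_ne z i with rfl | hzi
    · rw [Equiv.swap_apply_left, Equiv.swap_apply_left]
    rcases eq_or_ne z (i + 1) with rfl | hzi1
    · rw [Equiv.swap_apply_right, Equiv.swap_apply_right]
    · rw [Equiv.swap_apply_of_ne_of_ne hzi hzi1,
        Equiv.swap_apply_of_ne_of_ne (fun hc => hzi (add_right_cancel hc))
          (fun hc => hzi1 (add_right_cancel hc))]

lemma applyToggles_shift1 (L : List (ZMod n)) (σ : V ≃ ZMod n) :
    applyToggles G (L.map (· + 1)) (cycShift σ) = cycShift (applyToggles G L σ) := by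
  induction L generalizing σ with
  | nil => rfl
  | cons a L ih =>
      show applyToggles G (L.map (· + 1)) (toggle G (a + 1) (cycShift σ))
        = cycShift (applyToggles G L (toggle G a σ))
      rw [← cycShift_toggle, ih]

lemma applyToggles_shift (k : ℕ) (L : List (ZMod n)) (σ : V ≃ ZMod n) :
    applyToggles G (L.map (· + ((k : ℕ) : ZMod n))) (cycShift^[k] σ)
      = cycShift^[k] (applyToggles G L σ) := by
  induction k generalizing L σ with
  | zero =>
      have : L.map (· + ((0 : ℕ) : ZMod n)) = L := by simp
      rw [this]; rfl
  | succ k ih =>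
      have e : L.map (· + ((k + 1 : ℕ) : ZMod n)) = (L.map (· + ((k : ℕ) : ZMod n))).map (· + 1) := by
        rw [List.map_map]
        apply List.map_congr_left
        intro a _
        simp only [Function.comp_apply]
        push_cast
        ring
      rw [e, Function.iterate_succ_apply', Function.iterate_succ_apply',
        applyToggles_shift1, ih]

lemma cycShift_iterate_apply (k : ℕ) (σ : V ≃ ZMod n) (v : V) :
    (cycShift^[k] σ) v = σ v + ((k : ℕ) : ZMod n) := by
  induction k with
  | zero => simp
  | succ k ih =>
      rw [Function.iterate_succ_apply']
      show (cycShift^[k] σ) v + 1 = σ v + ((k + 1 : ℕ) : ZMod n)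
      rw [ih]
      push_cast
      ring

lemma cycShift_iterate_n (σ : V ≃ ZMod n) : cycShift^[n] σ = σ := by
  apply Equiv.ext
  intro v
  rw [cycShift_iterate_apply]
  simp [ZMod.natCast_self]

lemma ascL_map_add (a w b : ℕ) :
    (ascL n a w).map (· + ((b : ℕ) : ZMod n)) = ascL n (a + b) w := by
  unfold ascL
  rw [List.map_map]
  apply List.map_congr_left
  intro t _
  simp only [Function.comp_apply]
  push_cast
  ring

end Cyc

section LinExtMachinery
open List

variable {n : ℕ}

lemma not_pair_sublist_both {α : Type*} :
    ∀ {L : List α}, L.Nodup → ∀ {x y : α}, x ≠ y → [x, y] <+ L → [y, x] <+ L → False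
  | [], _, _, _, _, h1, _ => by cases h1.length_le
  | a :: L, hnd, x, y, hxy, h1, h2 => by
      rcases List.sublist_cons_iff.1 h1 with h1' | ⟨r1, hr1, hr1'⟩
      · rcases List.sublist_cons_iff.1 h2 with h2' | ⟨r2, hr2, hr2'⟩
        · exact not_pair_sublist_both (List.nodup_cons.1 hnd).2 hxy h1' h2'
        · -- y = a, r2 = [x] <+ L, but also x,y ∈ L from h1'
          have hy : y ∈ L := (h1'.subset (by simp))
          have : y = a := by injection hr2
          exact (List.nodup_cons.1 hnd).1 (this ▸ hy)
      · have hx : x = a := by injection hr1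
        have hr1'' : r1 = [y] := by injection hr1 with _ h; exact h.symm
        rcases List.sublist_cons_iff.1 h2 with h2' | ⟨r2, hr2, hr2'⟩
        · have hxL : x ∈ L := h2'.subset (by simp)
          exact (List.nodup_cons.1 hnd).1 (hx ▸ hxL)
        · have hy2 : y = a := by injection hr2
          exact hxy (hx.trans hy2.symm)

lemma pair_erase {α : Type*} {x p q : α} (hp : p ≠ x) (hq : q ≠ x) :
    ∀ (A : List α) {B : List α}, [p, q] <+ A ++ x :: B → [p, q] <+ A ++ B
  | [], B, h => by
      rcases List.sublist_cons_iff.1 h with h' | ⟨r, hr, _⟩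
      · exact h'
      · exact absurd (by injection hr) hp
  | a :: A, B, h => by
      rcases List.sublist_cons_iff.1 h with h' | ⟨r, hr, hr'⟩
      · exact (pair_erase hp hq A h').cons a
      · have hpa : p = a := by injection hr
        have hrq : r = [q] := by injection hr with _ h2; exact h2.symm
        subst hrq
        have hq2 : q ∈ A ++ x :: B := hr'.subset (by simp)
        have hqAB : q ∈ A ++ B := by
          rcases List.mem_append.1 hq2 with h3 | h3
          · exact List.mem_append_left _ h3
          · rcases List.mem_cons.1 h3 with h4 | h4
            · exact absurd h4 hq
            · exact List.mem_append_right _ h4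
        rw [hpa]
        exact (List.singleton_sublist.2 hqAB).cons₂ a

lemma teq_of_orders :
    ∀ (L₁ L₂ : List (ZMod n)), L₁.Nodup → L₁.Perm L₂ →
      (∀ x y : ZMod n, ¬ Far x y → [x, y] <+ L₁ → [x, y] <+ L₂) → TEq L₁ L₂
  | [], L₂, _, hperm, _ => by
      rw [hperm.symm.eq_nil]
      exact TEq.refl _
  | x :: L₁, L₂, hnd, hperm, h => by
      have hx2 : x ∈ L₂ := hperm.mem_iff.1 List.mem_cons_self
      obtain ⟨A, B, rfl⟩ := List.append_of_mem hx2
      have hnd2 : (A ++ x :: B).Nodup := hperm.nodup hnd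
      have hxA : x ∉ A := by
        intro hc
        have := (List.nodup_append.1 hnd2).2.2
        exact this x hc x List.mem_cons_self rfl
      have hxL1 : x ∉ L₁ := (List.nodup_cons.1 hnd).1
      have hfarA : ∀ y ∈ A, Far x y := by
        intro y hy
        by_contra hnf
        have hyx : y ≠ x := fun hc => hxA (hc ▸ hy)
        have hyL1 : y ∈ L₁ := by
          have hy2 : y ∈ x :: L₁ := hperm.mem_iff.2 (List.mem_append_left _ hy)
          rcases List.mem_cons.1 hy2 with hc | hc
          · exact absurd hc hyx
          · exact hc
        have h1 : [x, y] <+ x :: L₁ := (List.singleton_sublist.2 hyL1).cons₂ x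
        have h2 : [x, y] <+ A ++ x :: B := h x y hnf h1
        have h3 : [y, x] <+ A ++ x :: B :=
          List.Sublist.append (List.singleton_sublist.2 hy)
            (List.singleton_sublist.2 List.mem_cons_self)
        exact not_pair_sublist_both hnd2 (fun hc => hyx hc.symm) h2 h3
      have hL1' : L₁.Perm (A ++ B) := (hperm.trans List.perm_middle).cons_inv
      have ih : TEq L₁ (A ++ B) := by
        refine teq_of_orders L₁ (A ++ B) (List.nodup_cons.1 hnd).2 hL1' ?_
        intro p q hnf hsub
        have hp : p ∈ L₁ := hsub.subset (by simp)
        have hq : q ∈ L₁ := hsub.subset (by simp)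
        have hsub2 : [p, q] <+ A ++ x :: B :=
          h p q hnf (hsub.trans (List.sublist_cons_self x L₁))
        exact pair_erase (fun hc => hxL1 (by rw [← hc]; exact hp))
          (fun hc => hxL1 (by rw [← hc]; exact hq)) A hsub2
      have hpull : TEq (A ++ x :: B) (x :: (A ++ B)) := pullOne B hfarA
      exact (ih.cons x).trans hpull.symm

lemma pair_sublist_decomp {α : Type*} {x y : α} :
    ∀ {L : List α}, [x, y] <+ L → ∃ A B, L = A ++ x :: B ∧ y ∈ B
  | [], h => by cases h.length_le
  | a :: L, h => by
      rcases List.sublist_cons_iff.1 h with h' | ⟨r, hr, hr'⟩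
      · obtain ⟨A, B, hAB, hy⟩ := pair_sublist_decomp h'
        exact ⟨a :: A, B, by rw [hAB]; rfl, hy⟩
      · have hxa : x = a := by injection hr
        have hry : r = [y] := by injection hr with _ h2; exact h2.symm
        subst hry
        have : y ∈ L := hr'.subset (by simp)
        exact ⟨[], L, by simp [hxa], this⟩

lemma mem_ascL' {a w t : ℕ} (ht : t < w) : ((a + t : ℕ) : ZMod n) ∈ ascL n a w := by
  simp only [ascL, List.mem_map, List.mem_range]
  exact ⟨t, ht, rfl⟩

lemma mem_descL' {a w t : ℕ} (ht : t < w) : ((a - t : ℕ) : ZMod n) ∈ descL n a w := by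
  simp only [descL, List.mem_map, List.mem_range]
  exact ⟨t, ht, rfl⟩

lemma pair_sublist_ascL {a w i j : ℕ} (h1 : i < j) (h2 : j < w) :
    [((a + i : ℕ) : ZMod n), ((a + j : ℕ) : ZMod n)] <+ ascL n a w := by
  have e1 : ascL n a w = ascL n a i ++ ascL n (a + i) (w - i) := by
    rw [← ascL_append]; congr 1; omega
  have e2 : ascL n (a + i) (w - i) = ((a + i : ℕ) : ZMod n) :: ascL n (a + i + 1) (w - i - 1) := by
    obtain ⟨u, hu⟩ : ∃ u, w - i = u + 1 := ⟨w - i - 1, by omega⟩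
    have hu' : w - i - 1 = u := by omega
    rw [hu', hu, ascL_succ_head]
  have hmem : ((a + j : ℕ) : ZMod n) ∈ ascL n (a + i + 1) (w - i - 1) := by
    have := mem_ascL' (n := n) (a := a + i + 1) (t := j - i - 1) (w := w - i - 1) (by omega)
    rw [show a + i + 1 + (j - i - 1) = a + j by omega] at this
    exact this
  have h3 : [((a + i : ℕ) : ZMod n), ((a + j : ℕ) : ZMod n)]
      <+ ascL n (a + i) (w - i) := by
    rw [e2]
    exact (List.singleton_sublist.2 hmem).cons₂ _
  rw [e1]
  exact List.sublist_append_of_sublist_right h3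

lemma pair_sublist_descL {a w i j : ℕ} (h1 : i < j) (h2 : j < w) :
    [((a - i : ℕ) : ZMod n), ((a - j : ℕ) : ZMod n)] <+ descL n a w := by
  have e1 : descL n a w = descL n a i ++ descL n (a - i) (w - i) := by
    rw [← descL_append]; congr 1; omega
  have e2 : descL n (a - i) (w - i)
      = ((a - i : ℕ) : ZMod n) :: descL n (a - i - 1) (w - i - 1) := by
    obtain ⟨u, hu⟩ : ∃ u, w - i = u + 1 := ⟨w - i - 1, by omega⟩
    have hu' : w - i - 1 = u := by omega
    rw [hu', hu, descL_succ_head]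
  have hmem : ((a - j : ℕ) : ZMod n) ∈ descL n (a - i - 1) (w - i - 1) := by
    have := mem_descL' (n := n) (a := a - i - 1) (t := j - i - 1) (w := w - i - 1) (by omega)
    rw [show a - i - 1 - (j - i - 1) = a - j by omega] at this
    exact this
  have h3 : [((a - i : ℕ) : ZMod n), ((a - j : ℕ) : ZMod n)]
      <+ descL n (a - i) (w - i) := by
    rw [e2]
    exact (List.singleton_sublist.2 hmem).cons₂ _
  rw [e1]
  exact List.sublist_append_of_sublist_right h3

lemma pair_sublist_symm_lt {m : ℕ} (π : Fin m ≃ ZMod n) {x y : ZMod n}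
    (h : [x, y] <+ List.ofFn fun k => π k) : π.symm x < π.symm y := by
  obtain ⟨A, B, hAB, hy⟩ := pair_sublist_decomp h
  have hlen : m = A.length + (B.length + 1) := by
    have := congrArg List.length hAB
    simpa [List.length_ofFn, Nat.add_comm] using this
  obtain ⟨k, hk, hkg⟩ := List.getElem_of_mem hy
  have hiA : A.length < m := by omega
  have hjlt : A.length + 1 + k < m := by omega
  have hx : x = π ⟨A.length, hiA⟩ := by
    have h1 : (List.ofFn fun k => π k)[A.length]'(by rw [List.length_ofFn]; omega)
        = π ⟨A.length, hiA⟩ := by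
      rw [List.getElem_ofFn]
    have h2 : (List.ofFn fun k => π k)[A.length]'(by rw [List.length_ofFn]; omega) = x := by
      simp only [hAB]
      rw [List.getElem_append_right (le_refl A.length)]
      simp
    rw [← h2, h1]
  have hy2 : y = π ⟨A.length + 1 + k, hjlt⟩ := by
    have h1 : (List.ofFn fun k => π k)[A.length + 1 + k]'(by rw [List.length_ofFn]; omega)
        = π ⟨A.length + 1 + k, hjlt⟩ := by
      rw [List.getElem_ofFn]
    have h2 : (List.ofFn fun k => π k)[A.length + 1 + k]'(by rw [List.length_ofFn]; omega)
        = y := by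
      simp only [hAB]
      rw [List.getElem_append_right (by omega : A.length ≤ A.length + 1 + k)]
      have e : A.length + 1 + k - A.length = k + 1 := by omega
      simp only [e, List.getElem_cons_succ]
      exact hkg
    rw [← h2, h1]
  rw [hx, hy2, Equiv.symm_apply_apply, Equiv.symm_apply_apply]
  exact Fin.mk_lt_mk.2 (by omega)

end LinExtMachinery

open List

section Assembly

variable {n d : ℕ}

lemma mem_PL (hn : 2 ≤ n) (hd1 : 1 ≤ d) (hdn : d < n) (x : ZMod n) : x ∈ PL n d := by
  haveI : NeZero n := ⟨by omega⟩
  have hxx : ((x.val : ℕ) : ZMod n) = x := ZMod.natCast_rightInverse x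
  have hxlt : x.val < n := ZMod.val_lt x
  unfold PL
  by_cases hd : d ≤ x.val
  · apply List.mem_append_left
    have := mem_ascL' (n := n) (a := d) (t := x.val - d) (w := n - d) (by omega)
    rwa [show d + (x.val - d) = x.val by omega, hxx] at this
  · apply List.mem_append_right
    have := mem_descL' (n := n) (a := d - 1) (t := d - 1 - x.val) (w := d) (by omega)
    rwa [show d - 1 - (d - 1 - x.val) = x.val by omega, hxx] at this

lemma PL_pair_asc (hn : 2 ≤ n) (hd1 : 1 ≤ d) (hdn : d < n) {x : ZMod n} (hx : d ≤ x.val) :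
    [x, x + 1] <+ PL n d := by
  haveI : NeZero n := ⟨by omega⟩
  have hxx : ((x.val : ℕ) : ZMod n) = x := ZMod.natCast_rightInverse x
  have hxlt : x.val < n := ZMod.val_lt x
  by_cases htop : x.val = n - 1
  · -- x is the last element of the ascending part, x+1 = 0 is the last of descending
    have hx1 : x + 1 = ((d - 1 - (d - 1) : ℕ) : ZMod n) := by
      rw [show d - 1 - (d - 1) = 0 by omega]
      rw [← hxx, htop]
      push_cast
      rw [show ((n - 1 : ℕ) : ZMod n) + 1 = ((n - 1 + 1 : ℕ) : ZMod n) by push_cast; ring]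
      rw [show n - 1 + 1 = n by omega, ZMod.natCast_self]
    have h1 : [x] <+ ascL n d (n - d) := by
      rw [List.singleton_sublist]
      have := mem_ascL' (n := n) (a := d) (t := n - 1 - d) (w := n - d) (by omega)
      rwa [show d + (n - 1 - d) = n - 1 by omega, show ((n - 1 : ℕ) : ZMod n) = x by
        rw [← hxx, htop]] at this
    have h2 : [x + 1] <+ descL n (d - 1) d := by
      rw [List.singleton_sublist, hx1]
      exact mem_descL' (by omega)
    exact h1.append h2
  · -- both in the ascending part
    have := pair_sublist_ascL (n := n) (a := d) (w := n - d) (i := x.val - d) (j := x.val + 1 - d)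
      (by omega) (by omega)
    rw [show d + (x.val - d) = x.val by omega, show d + (x.val + 1 - d) = x.val + 1 by omega,
      hxx] at this
    rw [show ((x.val + 1 : ℕ) : ZMod n) = x + 1 by push_cast; rw [hxx]] at this
    exact List.sublist_append_of_sublist_left this

lemma PL_pair_desc (hn : 2 ≤ n) (hd1 : 1 ≤ d) (hdn : d < n) {x : ZMod n} (hx : x.val < d) :
    [x + 1, x] <+ PL n d := by
  haveI : NeZero n := ⟨by omega⟩
  have hxx : ((x.val : ℕ) : ZMod n) = x := ZMod.natCast_rightInverse x
  have hx1 : ((x.val + 1 : ℕ) : ZMod n) = x + 1 := by push_cast; rw [hxx]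
  by_cases htop : x.val = d - 1
  · -- x+1 = d is the first element of the ascending part
    have h1 : [x + 1] <+ ascL n d (n - d) := by
      rw [List.singleton_sublist]
      have := mem_ascL' (n := n) (a := d) (t := 0) (w := n - d) (by omega)
      rwa [show d + 0 = d by omega, show ((d : ℕ) : ZMod n) = x + 1 by
        rw [← hx1]; congr 1; omega] at this
    have h2 : [x] <+ descL n (d - 1) d := by
      rw [List.singleton_sublist]
      have := mem_descL' (n := n) (a := d - 1) (t := 0) (w := d) (by omega)
      rwa [show d - 1 - 0 = d - 1 by omega, show ((d - 1 : ℕ) : ZMod n) = x by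
        rw [← hxx]; congr 1; omega] at this
    exact h1.append h2
  · -- both in descending part
    have := pair_sublist_descL (n := n) (a := d - 1) (w := d) (i := d - 2 - x.val) (j := d - 1 - x.val)
      (by omega) (by omega)
    rw [show d - 1 - (d - 2 - x.val) = x.val + 1 by omega,
      show d - 1 - (d - 1 - x.val) = x.val by omega, hxx, hx1] at this
    exact List.sublist_append_of_sublist_right this


lemma tpro_eq_PL (hn : 2 ≤ n) (hd1 : 1 ≤ d) (hdn : d < n) {V : Type*} (G : SimpleGraph V)
    (π : Fin n ≃ ZMod n) (hπ : linExt (fun i : ZMod n => decide (d ≤ i.val)) π)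
    (σ : V ≃ ZMod n) : tpro G π σ = applyToggles G (PL n d) σ := by
  haveI : NeZero n := ⟨by omega⟩
  have hteq : TEq (List.ofFn fun k => π k) (PL n d) := by
    have hnd : (List.ofFn fun k => π k).Nodup :=
      List.nodup_ofFn.2 (fun a b hab => π.injective hab)
    have hsubset : (List.ofFn fun k => π k) ⊆ PL n d := fun a _ => mem_PL hn hd1 hdn a
    have hlen : (PL n d).length ≤ (List.ofFn fun k => π k).length := by
      simp only [List.length_ofFn, PL, ascL, descL, List.length_append, List.length_map,
        List.length_range]
      omega
    have hperm : (List.ofFn fun k => π k).Perm (PL n d) :=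
      (List.subperm_of_subset hnd hsubset).perm_of_length_le hlen
    refine teq_of_orders _ _ hnd hperm ?_
    intro x y hnf hsub
    have hne : x ≠ y := by
      have hnodup : ([x, y] : List (ZMod n)).Nodup := hsub.nodup hnd
      simp only [List.nodup_cons, List.mem_singleton] at hnodup
      exact hnodup.1
    have hlt : π.symm x < π.symm y := pair_sublist_symm_lt π hsub
    unfold Far at hnf
    push_neg at hnf
    rcases eq_or_ne x (y + 1) with hxy1 | hxy1
    · -- x = y + 1 : y before y+1 would contradict, so y.val < d and use desc pair
      by_cases hdy : d ≤ y.val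
      · exfalso
        have hy := hπ y
        rw [if_pos (by simpa using hdy)] at hy
        rw [hxy1] at hlt
        exact absurd hy (not_lt.2 (le_of_lt hlt))
      · rw [hxy1]
        exact PL_pair_desc hn hd1 hdn (by omega)
    · have hyx1 : y = x + 1 := hnf hne hxy1
      by_cases hdx : d ≤ x.val
      · rw [hyx1]
        exact PL_pair_asc hn hd1 hdn hdx
      · exfalso
        have hx := hπ x
        rw [if_neg (by simpa using hdx)] at hx
        rw [hyx1] at hlt
        exact absurd hx (not_lt.2 (le_of_lt hlt))
  exact hteq.apply G σ

lemma broCyc_list_eq : ((List.range d).map fun j => ((j + 1 : ℕ) : ZMod n)) = ascL n 1 d := by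
  unfold ascL
  apply List.map_congr_left
  intro t _
  congr 1
  omega

lemma broCyc_iterate (σ : Fin n ≃ ZMod n) :
    ∀ m, m ≤ n → (broCyc n d)^[m] σ
      = cycShift^[m] (applyToggles (SimpleGraph.pathGraph n)
          ((List.range m).flatMap fun j => ascL n (n - j) d) σ)
  | 0, _ => rfl
  | m + 1, hm => by
      have ih := broCyc_iterate σ m (by omega)
      set τ := applyToggles (SimpleGraph.pathGraph n)
          ((List.range m).flatMap fun j => ascL n (n - j) d) σ with hτ
      have e1 : ascL n 1 d = (ascL n (n - m) d).map (· + ((m + 1 : ℕ) : ZMod n)) := by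
        rw [ascL_map_add, show n - m + (m + 1) = n + 1 by omega]
        exact (ascL_mod 1 d).symm
      have e2 : (broCyc n d)^[m + 1] σ = applyToggles (SimpleGraph.pathGraph n) (ascL n 1 d)
          (cycShift^[m + 1] τ) := by
        rw [Function.iterate_succ_apply', ih]
        unfold broCyc
        rw [broCyc_list_eq, Function.iterate_succ_apply']
      have e3 : ((List.range m).flatMap fun j => ascL n (n - j) d) ++ ascL n (n - m) d
          = (List.range (m + 1)).flatMap fun j => ascL n (n - j) d := by
        rw [List.range_succ, List.flatMap_append]
        simp
      rw [e2, e1, applyToggles_shift, hτ, ← applyToggles_append, e3]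

lemma broCyc_iterate_n (hdn : d ≤ n) (σ : Fin n ≃ ZMod n) :
    (broCyc n d)^[n] σ = applyToggles (SimpleGraph.pathGraph n) (WL n d) σ := by
  rw [broCyc_iterate σ n (le_refl n), cycShift_iterate_n]
  rfl

lemma tpro_cancel (hn : 2 ≤ n) (hd1 : 1 ≤ d) (hdn : d < n) {V : Type*} (G : SimpleGraph V)
    (π : Fin n ≃ ZMod n) (hπ : linExt (fun i : ZMod n => decide (d ≤ i.val)) π) :
    ∀ k (σ : V ≃ ZMod n), (tpro G π)^[k] (applyToggles G (QrepL n d k) σ) = σ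
  | 0, σ => rfl
  | k + 1, σ => by
      rw [Function.iterate_succ_apply]
      have e1 : QrepL n d (k + 1) = QrepL n d k ++ QL n d := rfl
      rw [e1, tpro_eq_PL hn hd1 hdn G π hπ, ← applyToggles_append, List.append_assoc,
        applyToggles_append]
      rw [show QL n d ++ PL n d = QL n d ++ (QL n d).reverse by
        rw [QL_reverse_eq_PL hd1 hdn]]
      rw [applyToggles_cancel]
      exact tpro_cancel hn hd1 hdn G π hπ k σ


theorem stmt15 (n : ℕ) (hn : 2 ≤ n) (d : ℕ) (hd1 : 1 ≤ d) (hd2 : d ≤ n - 1)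
    (π : Fin n ≃ ZMod n)
    (hπ : linExt (fun i : ZMod n => decide (d ≤ i.val)) π) :
    (∀ σ : Fin n ≃ ZMod n,
        (tpro (SimpleGraph.pathGraph n) π)^[d] ((broCyc n d)^[n] σ) = σ) ∧
      ∀ σ : Fin n ≃ ZMod n,
        (broCyc n d)^[n] ((tpro (SimpleGraph.pathGraph n) π)^[d] σ) = σ := by
  have hdn : d < n := by omega
  have conj1 : ∀ σ : Fin n ≃ ZMod n,
      (tpro (SimpleGraph.pathGraph n) π)^[d] ((broCyc n d)^[n] σ) = σ := by
    intro σ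
    rw [broCyc_iterate_n (le_of_lt hdn),
      (WL_TEq_Qrep hn hd1 hdn).apply (SimpleGraph.pathGraph n) σ]
    exact tpro_cancel hn hd1 hdn _ π hπ d σ
  refine ⟨conj1, ?_⟩
  intro σ
  set g : (Fin n ≃ ZMod n) → (Fin n ≃ ZMod n) := (broCyc n d)^[n] with hg
  set f : (Fin n ≃ ZMod n) → (Fin n ≃ ZMod n) := (tpro (SimpleGraph.pathGraph n) π)^[d] with hf
  have hginj : Function.Injective g := fun a b hab => by
    have : f (g a) = f (g b) := by rw [hab]
    rwa [conj1 a, conj1 b] at this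
  have hgsurj : Function.Surjective g := Finite.surjective_of_injective hginj
  obtain ⟨τ, rfl⟩ := hgsurj σ
  rw [conj1 τ]
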